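/- Let a > 0 and n be a positive integer, let L_Φ = a·n·(2n−1)·2^{2n−2} be the Lipschitz constant of the flux Φ_{a,n} on [0,2], and let W̃ = (w̃_{iℓ}) be an N×N matrix with all entries positive and with identical rows, i.e. w̃_{j,ℓ} = w̃_{i,ℓ} for all 1 ≤ i, j, ℓ ≤ N. Suppose v^k ∈ (0,1)^N has pairwise distinct entries, 0 < v^k_i < v^k_j < 1 for some indices i, j, and the time step size satisfies 0 < τ < 1 / (2·L_Φ·max_{1≤i≤N} Σ_{ℓ=1}^N w̃_{iℓ}). Then the explicit scheme v^{k+1}_m = v^k_m + τ·[ Σ_{ℓ ≠ m} w̃_{m,ℓ}·Φ_{a,n}(v^k_ℓ − v^k_m) − Σ_{ℓ=1}^N w̃_{m,ℓ}·Φ_{a,n}(v^k_ℓ + v^k_m) ] satisfies v^{k+1}_i < v^{k+1}_j; i.e., the rank-order of the positions is preserved. -/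
import Mathlib


/-- Flux `Φ_{a,n}(s) = a·n·(s−1)^(2n−1)` for `s ≥ 0`, extended by
`Φ_{a,n}(s) = a·n·(s+1)^(2n−1)` for `s < 0`. -/
noncomputable def flux (a : ℝ) (n : ℕ) (s : ℝ) : ℝ :=
  if 0 ≤ s then a * n * (s - 1) ^ (2 * n - 1) else a * n * (s + 1) ^ (2 * n - 1)

/-- Lipschitz constant `L_Φ = a·n·(2n−1)·2^(2n−2)` of the flux `Φ_{a,n}` on `[0,2]`. -/
noncomputable def LPhi (a : ℝ) (n : ℕ) : ℝ :=
  a * n * ((2 * n - 1 : ℕ) : ℝ) * (2 : ℝ) ^ (2 * n - 2)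

lemma pow_lip (m : ℕ) (x y : ℝ) (hx : |x| ≤ 1) (hy : |y| ≤ 1) :
    |x ^ m - y ^ m| ≤ m * |x - y| := by
  induction m with
  | zero => simp
  | succ k ih =>
    have h1 : x ^ (k+1) - y ^ (k+1) = x ^ k * (x - y) + y * (x ^ k - y ^ k) := by ring
    calc |x ^ (k+1) - y ^ (k+1)| ≤ |x ^ k * (x - y)| + |y * (x ^ k - y ^ k)| := by
          rw [h1]; exact abs_add_le _ _
      _ = |x| ^ k * |x - y| + |y| * |x ^ k - y ^ k| := by rw [abs_mul, abs_mul, abs_pow]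
      _ ≤ 1 * |x - y| + 1 * ((k : ℝ) * |x - y|) := by
          have h2 : |x| ^ k ≤ 1 := pow_le_one₀ (abs_nonneg x) hx
          gcongr
      _ = ((k : ℝ) + 1) * |x - y| := by ring
      _ = ((k + 1 : ℕ) : ℝ) * |x - y| := by push_cast; ring

lemma LPhi_ge (a : ℝ) (ha : 0 < a) (n : ℕ) :
    a * n * ((2 * n - 1 : ℕ) : ℝ) ≤ LPhi a n := by
  have h1 : (1 : ℝ) ≤ (2 : ℝ) ^ (2 * n - 2) := one_le_pow₀ (by norm_num)
  have h0 : 0 ≤ a * n * ((2 * n - 1 : ℕ) : ℝ) := by positivity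
  calc a * n * ((2 * n - 1 : ℕ) : ℝ) = a * n * ((2 * n - 1 : ℕ) : ℝ) * 1 := by ring
    _ ≤ LPhi a n := by unfold LPhi; gcongr

lemma flux_lip_pos (a : ℝ) (ha : 0 < a) (n : ℕ) (x y : ℝ)
    (hx0 : 0 ≤ x) (hx2 : x ≤ 2) (hy0 : 0 ≤ y) (hy2 : y ≤ 2) :
    |flux a n x - flux a n y| ≤ LPhi a n * |x - y| := by
  unfold flux
  rw [if_pos hx0, if_pos hy0]
  have hx1 : |x - 1| ≤ 1 := abs_le.2 ⟨by linarith, by linarith⟩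
  have hy1 : |y - 1| ≤ 1 := abs_le.2 ⟨by linarith, by linarith⟩
  have h := pow_lip (2 * n - 1) (x - 1) (y - 1) hx1 hy1
  have hxy : (x - 1) - (y - 1) = x - y := by ring
  rw [hxy] at h
  have key : a * n * (x - 1) ^ (2 * n - 1) - a * n * (y - 1) ^ (2 * n - 1)
      = a * n * ((x - 1) ^ (2 * n - 1) - (y - 1) ^ (2 * n - 1)) := by ring
  rw [key, abs_mul, abs_of_nonneg (by positivity : (0:ℝ) ≤ a * n)]
  calc a * n * |(x - 1) ^ (2 * n - 1) - (y - 1) ^ (2 * n - 1)|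
      ≤ a * n * (((2 * n - 1 : ℕ) : ℝ) * |x - y|) := by
        have : (0:ℝ) ≤ a * n := by positivity
        exact mul_le_mul_of_nonneg_left h this
    _ = a * n * ((2 * n - 1 : ℕ) : ℝ) * |x - y| := by ring
    _ ≤ LPhi a n * |x - y| := mul_le_mul_of_nonneg_right (LPhi_ge a ha n) (abs_nonneg _)

lemma flux_lip_neg (a : ℝ) (ha : 0 < a) (n : ℕ) (x y : ℝ)
    (hx0 : x < 0) (hx2 : -2 ≤ x) (hy0 : y < 0) (hy2 : -2 ≤ y) :
    |flux a n x - flux a n y| ≤ LPhi a n * |x - y| := by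
  unfold flux
  rw [if_neg (not_le.2 hx0), if_neg (not_le.2 hy0)]
  have hx1 : |x + 1| ≤ 1 := abs_le.2 ⟨by linarith, by linarith⟩
  have hy1 : |y + 1| ≤ 1 := abs_le.2 ⟨by linarith, by linarith⟩
  have h := pow_lip (2 * n - 1) (x + 1) (y + 1) hx1 hy1
  have hxy : (x + 1) - (y + 1) = x - y := by ring
  rw [hxy] at h
  have key : a * n * (x + 1) ^ (2 * n - 1) - a * n * (y + 1) ^ (2 * n - 1)
      = a * n * ((x + 1) ^ (2 * n - 1) - (y + 1) ^ (2 * n - 1)) := by ring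
  rw [key, abs_mul, abs_of_nonneg (by positivity : (0:ℝ) ≤ a * n)]
  calc a * n * |(x + 1) ^ (2 * n - 1) - (y + 1) ^ (2 * n - 1)|
      ≤ a * n * (((2 * n - 1 : ℕ) : ℝ) * |x - y|) := by
        have : (0:ℝ) ≤ a * n := by positivity
        exact mul_le_mul_of_nonneg_left h this
    _ = a * n * ((2 * n - 1 : ℕ) : ℝ) * |x - y| := by ring
    _ ≤ LPhi a n * |x - y| := mul_le_mul_of_nonneg_right (LPhi_ge a ha n) (abs_nonneg _)

lemma flux_pos_of_neg (a : ℝ) (ha : 0 < a) (n : ℕ) (hn : 0 < n) (x : ℝ)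
    (h1 : -1 < x) (h0 : x < 0) : 0 < flux a n x := by
  unfold flux
  rw [if_neg (not_le.2 h0)]
  have : 0 < x + 1 := by linarith
  have hn' : (0:ℝ) < (n:ℝ) := by exact_mod_cast hn
  positivity

lemma flux_neg_of_pos (a : ℝ) (ha : 0 < a) (n : ℕ) (hn : 0 < n) (x : ℝ)
    (h0 : 0 ≤ x) (h1 : x < 1) : flux a n x < 0 := by
  unfold flux
  rw [if_pos h0]
  have hodd : Odd (2 * n - 1) := ⟨n - 1, by omega⟩
  have hneg : x - 1 < 0 := by linarith
  have hp : (x - 1) ^ (2 * n - 1) < 0 := hodd.pow_neg hneg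
  have hn' : (0:ℝ) < (n:ℝ) := by exact_mod_cast hn
  have han : 0 < a * n := by positivity
  exact mul_neg_of_pos_of_neg han hp

/-- Rank-order preservation of the explicit scheme: for a weight matrix with
positive entries and identical rows, pairwise distinct values `vᵏ ∈ (0,1)^N` with
`vᵏᵢ < vᵏⱼ`, and `0 < τ < 1/(2·L_Φ·maxᵢ Σₗ w̃ᵢₗ)`, the explicit time step preserves the
order: `vᵏ⁺¹ᵢ < vᵏ⁺¹ⱼ`. -/
theorem stmt16 (a : ℝ) (ha : 0 < a) (n : ℕ) (hn : 0 < n) (N : ℕ) (hN : 1 ≤ N)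
    (W : Matrix (Fin N) (Fin N) ℝ)
    (hpos : ∀ i l, 0 < W i l) (hrows : ∀ i j l, W j l = W i l)
    (τ : ℝ) (vk vk1 : Fin N → ℝ)
    (hdist : ∀ i j, i ≠ j → vk i ≠ vk j)
    (hrange : ∀ m, vk m ∈ Set.Ioo (0 : ℝ) 1)
    (i j : Fin N) (hij : vk i < vk j)
    (hτ0 : 0 < τ) (hτ : τ < 1 / (2 * LPhi a n * ⨆ m, ∑ l, W m l))
    (hscheme : ∀ m, vk1 m = vk m + τ *
      ((∑ l ∈ Finset.univ.erase m, W m l * flux a n (vk l - vk m)) -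
        ∑ l, W m l * flux a n (vk l + vk m))) :
    vk1 i < vk1 j := by
  have hNE : Nonempty (Fin N) := ⟨⟨0, hN⟩⟩
  set L := LPhi a n with hL
  set Φ := flux a n with hΦ
  set w : Fin N → ℝ := fun l => W i l with hw
  set S : ℝ := ∑ l, w l with hS
  set d : ℝ := vk j - vk i with hd
  have hd0 : 0 < d := by simp only [hd]; linarith
  have hnR : (0:ℝ) < (n:ℝ) := by exact_mod_cast hn
  have hL0 : 0 < L := by
    rw [hL]; unfold LPhi
    have : (0:ℝ) < ((2 * n - 1 : ℕ) : ℝ) := by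
      have : 1 ≤ 2 * n - 1 := by omega
      exact_mod_cast Nat.lt_of_lt_of_le Nat.zero_lt_one this
    positivity
  have hS0 : 0 < S := Finset.sum_pos (fun l _ => hpos i l) ⟨⟨0, hN⟩, Finset.mem_univ _⟩
  -- the sup is S
  have hsup : (⨆ m, ∑ l, W m l) = S := by
    have : (fun m => ∑ l, W m l) = fun _ => S := by
      funext m
      exact Finset.sum_congr rfl fun l _ => hrows i m l
    rw [this, ciSup_const]
  rw [hsup] at hτ
  have h2LS : 0 < 2 * L * S := by positivity
  have hτ1 : τ * (2 * L * S) < 1 := by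
    rw [lt_div_iff₀ h2LS] at hτ
    linarith [hτ]
  have hij' : i ≠ j := fun h => absurd hij (h ▸ lt_irrefl _)
  -- range facts
  have hr := hrange
  -- Q bound : ∀ l, |Φ (vk l + vk j) - Φ (vk l + vk i)| ≤ L * d
  have hQ : ∀ l : Fin N, |Φ (vk l + vk j) - Φ (vk l + vk i)| ≤ L * d := by
    intro l
    have h1 := hr l; have h2 := hr i; have h3 := hr j
    have := flux_lip_pos a ha n (vk l + vk j) (vk l + vk i)
      (by linarith [h1.1, h3.1]) (by linarith [h1.2, h3.2])
      (by linarith [h1.1, h2.1]) (by linarith [h1.2, h2.2])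
    have habs : |(vk l + vk j) - (vk l + vk i)| = d := by
      rw [show (vk l + vk j) - (vk l + vk i) = d by rw [hd]; ring]
      exact abs_of_pos hd0
    rw [habs] at this
    exact this
  -- T bound
  have hT : ∀ l : Fin N, l ≠ i → l ≠ j →
      -(L * d) ≤ Φ (vk l - vk j) - Φ (vk l - vk i) := by
    intro l hli hlj
    have h1 := hr l; have h2 := hr i; have h3 := hr j
    rcases lt_trichotomy (vk l) (vk i) with hlt | heq | hgt
    · -- both negative
      have := flux_lip_neg a ha n (vk l - vk j) (vk l - vk i)
        (by linarith) (by linarith [h1.1, h3.2]) (by linarith) (by linarith [h1.1, h2.2])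
      have habs : |(vk l - vk j) - (vk l - vk i)| = d := by
        rw [show (vk l - vk j) - (vk l - vk i) = -d by rw [hd]; ring, abs_neg]
        exact abs_of_pos hd0
      rw [habs] at this
      linarith [(abs_le.1 this).1]
    · exact absurd heq (hdist l i hli)
    · rcases lt_trichotomy (vk l) (vk j) with hlt2 | heq2 | hgt2
      · -- cross case: vk i < vk l < vk j
        have hp : 0 < Φ (vk l - vk j) :=
          flux_pos_of_neg a ha n hn _ (by linarith [h1.1, h3.2]) (by linarith)
        have hq : Φ (vk l - vk i) < 0 :=
          flux_neg_of_pos a ha n hn _ (by linarith) (by linarith [h1.2, h2.1])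
        nlinarith [mul_pos hL0 hd0]
      · exact absurd heq2 (hdist l j hlj)
      · -- both positive
        have := flux_lip_pos a ha n (vk l - vk j) (vk l - vk i)
          (by linarith) (by linarith [h1.2, h3.1]) (by linarith) (by linarith [h1.2, h2.1])
        have habs : |(vk l - vk j) - (vk l - vk i)| = d := by
          rw [show (vk l - vk j) - (vk l - vk i) = -d by rw [hd]; ring, abs_neg]
          exact abs_of_pos hd0
        rw [habs] at this
        linarith [(abs_le.1 this).1]
  -- sums decomposition
  set T : Finset (Fin N) := (Finset.univ.erase j).erase i with hTdef
  have hiT : i ∈ Finset.univ.erase j := Finset.mem_erase.2 ⟨hij', Finset.mem_univ _⟩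
  have hjT : j ∈ Finset.univ.erase i := Finset.mem_erase.2 ⟨hij'.symm, Finset.mem_univ _⟩
  have hcomm : (Finset.univ.erase i).erase j = T := by
    rw [hTdef]; ext x; simp only [Finset.mem_erase, Finset.mem_univ, and_true]; tauto
  have hPj : ∑ l ∈ Finset.univ.erase j, W j l * Φ (vk l - vk j)
      = (∑ l ∈ T, w l * Φ (vk l - vk j)) + w i * Φ (vk i - vk j) := by
    rw [show (∑ l ∈ Finset.univ.erase j, W j l * Φ (vk l - vk j))
        = ∑ l ∈ Finset.univ.erase j, w l * Φ (vk l - vk j) from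
      Finset.sum_congr rfl fun l _ => by rw [hw, hrows i j l]]
    exact (Finset.sum_erase_add _ _ hiT).symm
  have hPi : ∑ l ∈ Finset.univ.erase i, W i l * Φ (vk l - vk i)
      = (∑ l ∈ T, w l * Φ (vk l - vk i)) + w j * Φ (vk j - vk i) := by
    rw [← hcomm]
    exact (Finset.sum_erase_add _ _ hjT).symm
  have hQj : ∑ l, W j l * Φ (vk l + vk j) = ∑ l, w l * Φ (vk l + vk j) :=
    Finset.sum_congr rfl fun l _ => by rw [hw, hrows i j l]
  -- cross term nonneg
  have hcross : 0 ≤ w i * Φ (vk i - vk j) - w j * Φ (vk j - vk i) := by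
    have h2 := hr i; have h3 := hr j
    have hp : 0 < Φ (vk i - vk j) :=
      flux_pos_of_neg a ha n hn _ (by linarith [h2.1, h3.2]) (by linarith)
    have hq : Φ (vk j - vk i) < 0 :=
      flux_neg_of_pos a ha n hn _ (by linarith) (by linarith [h3.2, h2.1])
    have hwi := hpos i i; have hwj := hpos i j
    nlinarith
  -- T-sum bound
  have hTw : ∑ l ∈ T, w l ≤ S := by
    rw [hS]
    exact Finset.sum_le_sum_of_subset_of_nonneg (Finset.Subset.trans (Finset.erase_subset _ _)
      (Finset.erase_subset _ _)) (fun l _ _ => le_of_lt (hpos i l))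
  have hTbound : -(L * d) * S ≤
      (∑ l ∈ T, w l * Φ (vk l - vk j)) - ∑ l ∈ T, w l * Φ (vk l - vk i) := by
    have h1 : -(L * d) * S ≤ -(L * d) * ∑ l ∈ T, w l := by
      apply mul_le_mul_of_nonpos_left hTw
      have : 0 ≤ L * d := le_of_lt (mul_pos hL0 hd0)
      linarith
    refine le_trans h1 ?_
    rw [← Finset.sum_sub_distrib, Finset.mul_sum]
    apply Finset.sum_le_sum
    intro l hl
    have hli : l ≠ i := (Finset.mem_erase.1 hl).1
    have hlj : l ≠ j := (Finset.mem_erase.1 (Finset.mem_erase.1 hl).2).1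
    have hb := hT l hli hlj
    have hwl : 0 < w l := hpos i l
    calc -(L * d) * w l = w l * (-(L * d)) := by ring
      _ ≤ w l * (Φ (vk l - vk j) - Φ (vk l - vk i)) :=
          mul_le_mul_of_nonneg_left hb (le_of_lt hwl)
      _ = w l * Φ (vk l - vk j) - w l * Φ (vk l - vk i) := by ring
  -- Q-sum bound
  have hQbound : (∑ l, w l * Φ (vk l + vk j)) - ∑ l, w l * Φ (vk l + vk i) ≤ L * d * S := by
    rw [← Finset.sum_sub_distrib, hS, Finset.mul_sum]
    apply Finset.sum_le_sum
    intro l _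
    have hwl : 0 < w l := hpos i l
    have hb := (abs_le.1 (hQ l)).2
    calc w l * Φ (vk l + vk j) - w l * Φ (vk l + vk i)
        = w l * (Φ (vk l + vk j) - Φ (vk l + vk i)) := by ring
      _ ≤ w l * (L * d) := mul_le_mul_of_nonneg_left hb (le_of_lt hwl)
      _ = L * d * w l := by ring
  -- assemble
  have hvj := hscheme j
  have hvi := hscheme i
  have hdiff : vk1 j - vk1 i = d + τ *
      (((∑ l ∈ T, w l * Φ (vk l - vk j)) - ∑ l ∈ T, w l * Φ (vk l - vk i))
        + (w i * Φ (vk i - vk j) - w j * Φ (vk j - vk i))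
        - ((∑ l, w l * Φ (vk l + vk j)) - ∑ l, w l * Φ (vk l + vk i))) := by
    rw [hvj, hvi, hPj, hPi, hQj, hd]
    ring
  have hE : -(2 * L * S * d) ≤
      ((∑ l ∈ T, w l * Φ (vk l - vk j)) - ∑ l ∈ T, w l * Φ (vk l - vk i))
        + (w i * Φ (vk i - vk j) - w j * Φ (vk j - vk i))
        - ((∑ l, w l * Φ (vk l + vk j)) - ∑ l, w l * Φ (vk l + vk i)) := by
    linarith [hTbound, hcross, hQbound]
  have hfinal : 0 < vk1 j - vk1 i := by
    rw [hdiff]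
    have h1 : d + τ * -(2 * L * S * d) ≤ d + τ *
        (((∑ l ∈ T, w l * Φ (vk l - vk j)) - ∑ l ∈ T, w l * Φ (vk l - vk i))
          + (w i * Φ (vk i - vk j) - w j * Φ (vk j - vk i))
          - ((∑ l, w l * Φ (vk l + vk j)) - ∑ l, w l * Φ (vk l + vk i))) := by
      have := mul_le_mul_of_nonneg_left hE (le_of_lt hτ0)
      linarith
    have h2 : 0 < d + τ * -(2 * L * S * d) := by
      have heq : d + τ * -(2 * L * S * d) = d * (1 - τ * (2 * L * S)) := by ring
      rw [heq]
      exact mul_pos hd0 (by linarith)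
    linarith
  linarith
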